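/- Let X ⊆ G be classes of objects in an abelian category A such that (X, Y) (with Y = X^⊥) is a complete hereditary cotorsion pair and (G, H, X ∩ Y) is a left AB-context (in particular every object of A has finite X-resolution dimension and H = G^⊥ consists of the objects with finite (X ∩ Y)-resolution dimension). Then G ∩ X̂ = X, where X̂ is the class of objects with finite X-resolution dimension; equivalently, an object of G with finite X-resolution dimension lies in X. -/
import Mathlib


open CategoryTheory Limits

universe w v u

namespace PaperAB

variable {C : Type u} [Category.{v} C] [Abelian C] [HasExt.{w} C]

/-- Vanishing of `Ext^n(A, B)`. -/
def extZero (A B : C) (n : ℕ) : Prop := Subsingleton (Abelian.Ext A B n)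

/-- The right `Ext^1`-orthogonal class of a class `𝒳`. -/
def rightOrth (𝒳 : C → Prop) : C → Prop := fun B => ∀ A, 𝒳 A → extZero A B 1

/-- The left `Ext^1`-orthogonal class of a class `𝒴`. -/
def leftOrth (𝒴 : C → Prop) : C → Prop := fun A => ∀ B, 𝒴 B → extZero A B 1

/-- `f, g` form a short exact sequence `0 → A → B → D → 0`. -/
def IsSES {A B D : C} (f : A ⟶ B) (g : B ⟶ D) : Prop :=
  ∃ (zero : f ≫ g = 0), (ShortComplex.mk f g zero).ShortExact

/-- `(𝒳, 𝒴)` is a cotorsion pair. -/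
structure CotorsionPair (𝒳 𝒴 : C → Prop) : Prop where
  eqLeft : ∀ A, 𝒳 A ↔ leftOrth 𝒴 A
  eqRight : ∀ B, 𝒴 B ↔ rightOrth 𝒳 B

/-- Completeness of a pair of classes `(𝒳, 𝒴)`: every object admits a special
`𝒳`-precover and a special `𝒴`-preenvelope. -/
def Complete (𝒳 𝒴 : C → Prop) : Prop :=
  ∀ A : C,
    (∃ (Y X : C) (f : Y ⟶ X) (g : X ⟶ A), IsSES f g ∧ 𝒳 X ∧ 𝒴 Y) ∧
    (∃ (Y X : C) (f : A ⟶ Y) (g : Y ⟶ X), IsSES f g ∧ 𝒴 Y ∧ 𝒳 X)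

/-- Heredity: `Ext^n(𝒳, 𝒴) = 0` for all `n ≥ 1`. -/
def Hereditary (𝒳 𝒴 : C → Prop) : Prop :=
  ∀ A B, 𝒳 A → 𝒴 B → ∀ n, 1 ≤ n → extZero A B n

/-- Complete hereditary cotorsion pair. -/
structure CHCP (𝒳 𝒴 : C → Prop) : Prop where
  cotorsion : CotorsionPair 𝒳 𝒴
  complete : Complete 𝒳 𝒴
  hereditary : Hereditary 𝒳 𝒴

/-- `ResDimLE 𝒳 A n` : there exists an exact sequence
`0 → X n → ⋯ → X 0 → A → 0` with all `X i ∈ 𝒳`. -/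
def ResDimLE (𝒳 : C → Prop) (A : C) (n : ℕ) : Prop :=
  ∃ (X : ℕ → C) (d : ∀ i, X (i + 1) ⟶ X i) (ε : X 0 ⟶ A),
    (∀ i, i ≤ n → 𝒳 (X i)) ∧ (∀ i, n < i → IsZero (X i)) ∧ Epi ε ∧
    (∃ (zero : d 0 ≫ ε = 0), (ShortComplex.mk (d 0) ε zero).Exact) ∧
    (∀ i, ∃ (zero : d (i + 1) ≫ d i = 0),
      (ShortComplex.mk (d (i + 1)) (d i) zero).Exact)

/-- Objects of finite `𝒳`-resolution dimension (the class `X̂`). -/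
def FinResDim (𝒳 : C → Prop) (A : C) : Prop := ∃ n, ResDimLE 𝒳 A n

/-- The `𝒳`-resolution dimension of `A`, in `ℕ∞`. -/
noncomputable def ResDim (𝒳 : C → Prop) (A : C) : ℕ∞ :=
  sInf {m : ℕ∞ | ∃ n : ℕ, m = (n : ℕ∞) ∧ ResDimLE 𝒳 A n}

/-- The intersection of two classes. -/
def Inter (𝒳 𝒴 : C → Prop) : C → Prop := fun A => 𝒳 A ∧ 𝒴 A

def ClosedUnderExtensions (𝒲 : C → Prop) : Prop :=
  ∀ ⦃A B D : C⦄ (f : A ⟶ B) (g : B ⟶ D), IsSES f g → 𝒲 A → 𝒲 D → 𝒲 B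

def ClosedUnderKernels (𝒲 : C → Prop) : Prop :=
  ∀ ⦃A B D : C⦄ (f : A ⟶ B) (g : B ⟶ D), IsSES f g → 𝒲 B → 𝒲 D → 𝒲 A

def ClosedUnderCokernels (𝒲 : C → Prop) : Prop :=
  ∀ ⦃A B D : C⦄ (f : A ⟶ B) (g : B ⟶ D), IsSES f g → 𝒲 A → 𝒲 B → 𝒲 D

def ClosedUnderSummands (𝒲 : C → Prop) : Prop :=
  ∀ ⦃A B : C⦄ (i : A ⟶ B) (p : B ⟶ A), i ≫ p = 𝟙 A → 𝒲 B → 𝒲 A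

/-- A class is thick if it is closed under direct summands and has the
two-out-of-three property on short exact sequences. -/
def IsThick (𝒲 : C → Prop) : Prop :=
  ClosedUnderSummands 𝒲 ∧ ClosedUnderExtensions 𝒲 ∧
    ClosedUnderKernels 𝒲 ∧ ClosedUnderCokernels 𝒲

/-- A class is left thick if it is closed under direct summands, extensions and
kernels of epimorphisms. -/
def LeftThick (𝒲 : C → Prop) : Prop :=
  ClosedUnderSummands 𝒲 ∧ ClosedUnderExtensions 𝒲 ∧ ClosedUnderKernels 𝒲

/-- A class is right thick if it is closed under direct summands, extensions and
cokernels of monomorphisms. -/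
def RightThick (𝒲 : C → Prop) : Prop :=
  ClosedUnderSummands 𝒲 ∧ ClosedUnderExtensions 𝒲 ∧ ClosedUnderCokernels 𝒲

/-- `ω` is a cogenerator for `𝒳`. -/
def IsCogeneratorFor (ω 𝒳 : C → Prop) : Prop :=
  (∀ A, ω A → 𝒳 A) ∧
  ∀ A, 𝒳 A → ∃ (W A' : C) (f : A ⟶ W) (g : W ⟶ A'), IsSES f g ∧ ω W ∧ 𝒳 A'

/-- `ω` is an injective cogenerator for `𝒳`. -/
def IsInjCogeneratorFor (ω 𝒳 : C → Prop) : Prop :=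
  IsCogeneratorFor ω 𝒳 ∧ ∀ A W, 𝒳 A → ω W → ∀ n, 1 ≤ n → extZero A W n

/-- A left weak Auslander–Buchweitz context `(𝒳, 𝒴, ω)`. -/
structure LeftWeakABContext (𝒳 𝒴 ω : C → Prop) : Prop where
  ab1 : LeftThick 𝒳
  ab2 : RightThick 𝒴
  ab2' : ∀ A, 𝒴 A → FinResDim 𝒳 A
  ab3 : (∀ A, ω A ↔ 𝒳 A ∧ 𝒴 A) ∧ IsInjCogeneratorFor ω 𝒳

/-- A left Auslander–Buchweitz context: a left weak AB-context in which every
object has finite `𝒳`-resolution dimension. -/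
structure LeftABContext (𝒳 𝒴 ω : C → Prop) extends LeftWeakABContext 𝒳 𝒴 ω : Prop where
  hat_all : ∀ A : C, FinResDim 𝒳 A

end PaperAB

namespace PaperAB

section Aux

variable {C : Type u} [Category.{v} C] [Abelian C] [HasExt.{w} C]

open Abelian ZeroObject

lemma extZero_iff_forall {A B : C} {n : ℕ} :
    extZero A B n ↔ ∀ x : Abelian.Ext A B n, x = 0 :=
  ⟨fun h x => @Subsingleton.elim _ h x 0, fun h => ⟨fun a b => by rw [h a, h b]⟩⟩

lemma extZero_of_retract {A B Z : C} {n : ℕ} (i : A ⟶ B) (p : B ⟶ A) (hip : i ≫ p = 𝟙 A)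
    (h : extZero B Z n) : extZero A Z n := by
  rw [extZero_iff_forall] at h ⊢
  intro x
  have h0 : x = (Ext.mk₀ (i ≫ p)).comp x (zero_add n) := by
    rw [hip, Ext.mk₀_id_comp]
  rw [h0, ← Ext.mk₀_comp_mk₀_assoc, h ((Ext.mk₀ p).comp x (zero_add n)), Ext.comp_zero]

/-- The core argument: if `A ∈ 𝒢` admits a short exact sequence
`0 → K → X₀ → A → 0` with `K, X₀ ∈ 𝒳`, then `A ∈ 𝒳`. -/
lemma core_lemma {𝒳 𝒢 : C → Prop} (hXG : ∀ A, 𝒳 A → 𝒢 A)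
    (h1 : CHCP 𝒳 (rightOrth 𝒳))
    (h2 : LeftABContext 𝒢 (rightOrth 𝒢) (Inter 𝒳 (rightOrth 𝒳)))
    {K X₀ A : C} {f : K ⟶ X₀} {g : X₀ ⟶ A} (hses : IsSES f g)
    (hK : 𝒳 K) (hX0 : 𝒳 X₀) (hA : 𝒢 A) : 𝒳 A := by
  rw [h1.cotorsion.eqLeft A]
  intro Z hZ
  -- take a special `𝒳`-precover of `Z` : `0 → Z' → XZ → Z → 0`
  obtain ⟨Z', XZ, u, v, ⟨huv, hS⟩, hXZ, hZ'⟩ := (h1.complete Z).1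
  -- `XZ` is in `rightOrth 𝒳`, hence in `ω`
  have hXZy : rightOrth 𝒳 XZ := by
    intro T hT
    rw [extZero_iff_forall]
    intro x
    obtain ⟨x₁, hx₁⟩ := Abelian.Ext.covariant_sequence_exact₂ T hS x
      (@Subsingleton.elim _ (hZ T hT) _ 0)
    rw [extZero_iff_forall.mp (hZ' T hT) x₁, Ext.zero_comp] at hx₁
    exact hx₁.symm
  -- `Ext^2 (A, Z') = 0` by dimension shifting along `0 → K → X₀ → A → 0`
  obtain ⟨hfg, hT⟩ := hses
  have h2AZ' : extZero A Z' 2 := by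
    rw [extZero_iff_forall]
    intro x
    obtain ⟨x₁, hx₁⟩ := Abelian.Ext.contravariant_sequence_exact₃ hT Z' x
      (@Subsingleton.elim _ (h1.hereditary X₀ Z' hX0 hZ' 2 (by norm_num)) _ 0) (n₀ := 1) rfl
    rw [extZero_iff_forall.mp (hZ' K hK) x₁, Ext.comp_zero] at hx₁
    exact hx₁.symm
  -- conclude `Ext^1 (A, Z) = 0` from the sequence `0 → Z' → XZ → Z → 0`
  rw [extZero_iff_forall]
  intro x
  obtain ⟨x₂, hx₂⟩ := Abelian.Ext.covariant_sequence_exact₃ A hS x rfl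
    (@Subsingleton.elim _ h2AZ' _ 0)
  rw [extZero_iff_forall.mp
    (h2.ab3.2.2 A XZ hA ⟨hXZ, hXZy⟩ 1 le_rfl) x₂, Ext.zero_comp] at hx₂
  exact hx₂.symm

lemma main_ind {𝒳 𝒢 : C → Prop} (hXG : ∀ A, 𝒳 A → 𝒢 A)
    (h1 : CHCP 𝒳 (rightOrth 𝒳))
    (h2 : LeftABContext 𝒢 (rightOrth 𝒢) (Inter 𝒳 (rightOrth 𝒳))) :
    ∀ (n : ℕ) (A : C), 𝒢 A → ResDimLE 𝒳 A n → 𝒳 A := by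
  intro n
  induction n with
  | zero =>
    rintro A hGA ⟨X, d, ε, hX, hz, hepi, ⟨z0, hex0⟩, hint⟩
    have hd0 : d 0 = 0 := (hz 1 (by norm_num)).eq_of_src _ _
    have hm : Mono ε := (ShortComplex.exact_iff_mono _ hd0).mp hex0
    have : IsIso ε := isIso_of_mono_of_epi ε
    rw [h1.cotorsion.eqLeft A]
    intro Z hZ
    exact extZero_of_retract (inv ε) ε (by simp)
      ((h1.cotorsion.eqLeft (X 0)).mp (hX 0 le_rfl) Z hZ)
  | succ n ih =>
    rintro A hGA ⟨X, d, ε, hX, hz, hepi, ⟨z0, hex0⟩, hint⟩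
    -- the short exact sequence `0 → K → X 0 → A → 0` with `K = ker ε`
    have hses : IsSES (kernel.ι ε) ε := by
      refine ⟨kernel.condition ε, ShortComplex.ShortExact.mk' ?_ inferInstance hepi⟩
      exact ShortComplex.exact_of_f_is_kernel _ (kernelIsKernel ε)
    have hKG : 𝒢 (kernel ε) := h2.ab1.2.2 _ _ hses (hXG _ (hX 0 (Nat.zero_le _))) hGA
    -- the shifted resolution exhibits `ResDimLE 𝒳 (kernel ε) n`
    obtain ⟨z1, hex1⟩ := hint 0
    have zero' : d 1 ≫ kernel.lift ε (d 0) z0 = 0 := by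
      rw [← cancel_mono (kernel.ι ε), Category.assoc, kernel.lift_ι, z1, zero_comp]
    have hKres : ResDimLE 𝒳 (kernel ε) n := by
      refine ⟨fun i => X (i + 1), fun i => d (i + 1), kernel.lift ε (d 0) z0,
        fun i hi => hX (i + 1) (by omega), fun i hi => hz (i + 1) (by omega),
        (ShortComplex.exact_iff_epi_kernel_lift (ShortComplex.mk (d 0) ε z0)).mp hex0,
        ⟨zero', ?_⟩, fun i => hint (i + 1)⟩
      let φ : ShortComplex.mk (d 1) (kernel.lift ε (d 0) z0) zero' ⟶
          ShortComplex.mk (d 1) (d 0) z1 :=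
        { τ₁ := 𝟙 _, τ₂ := 𝟙 _, τ₃ := kernel.ι ε,
          comm₁₂ := by simp, comm₂₃ := by simp }
      haveI : Epi φ.τ₁ := inferInstanceAs (Epi (𝟙 _))
      haveI : IsIso φ.τ₂ := inferInstanceAs (IsIso (𝟙 _))
      haveI : Mono φ.τ₃ := inferInstanceAs (Mono (kernel.ι ε))
      exact (ShortComplex.exact_iff_of_epi_of_isIso_of_mono φ).mpr hex1
    exact core_lemma hXG h1 h2 hses (ih _ hKG hKres) (hX 0 (Nat.zero_le _)) hGA

lemma resDimLE_self {𝒳 : C → Prop} {A : C} (hA : 𝒳 A) : ResDimLE 𝒳 A 0 := by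
  refine ⟨fun i => Nat.casesOn i A (fun _ => 0), fun i => 0, 𝟙 A,
    fun i hi => by obtain rfl : i = 0 := Nat.le_zero.mp hi; exact hA,
    fun i hi => by
      obtain ⟨j, rfl⟩ := Nat.exists_eq_add_of_lt hi
      exact isZero_zero C,
    inferInstance, ⟨by simp, ?_⟩, fun i => ⟨by simp, ?_⟩⟩
  · exact (ShortComplex.exact_iff_mono _ rfl).mpr (inferInstanceAs (Mono (𝟙 A)))
  · exact ShortComplex.exact_of_isZero_X₂ _ (isZero_zero C)

end Aux

/-- If `𝒳 ⊆ 𝒢`, `(𝒳, 𝒳^⊥)` is a complete hereditary cotorsion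
pair and `(𝒢, 𝒢^⊥, 𝒳 ∩ 𝒳^⊥)` is a left AB-context, then `𝒢 ∩ 𝒳̂ = 𝒳`, i.e. an
object of `𝒢` with finite `𝒳`-resolution dimension lies in `𝒳`. -/
theorem statement6 {C : Type u} [Category.{v} C] [Abelian C] [HasExt.{w} C]
    {𝒳 𝒢 : C → Prop} (hXG : ∀ A, 𝒳 A → 𝒢 A)
    (h1 : CHCP 𝒳 (rightOrth 𝒳))
    (h2 : LeftABContext 𝒢 (rightOrth 𝒢) (Inter 𝒳 (rightOrth 𝒳))) :
    ∀ A, (𝒢 A ∧ FinResDim 𝒳 A) ↔ 𝒳 A := by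
  intro A
  constructor
  · rintro ⟨hGA, n, hres⟩
    exact main_ind hXG h1 h2 n A hGA hres
  · intro hXA
    exact ⟨hXG A hXA, 0, resDimLE_self hXA⟩

end PaperAB
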